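/- Let M and N be elementarily equivalent L-structures (M ≡ N). If M is convexly orderable, then N is convexly orderable. -/

import Mathlib

open FirstOrder Language

/-- `S` is convex with respect to the strict order `r`. -/
def IsRConvex {X : Type*} (r : X → X → Prop) (S : Set X) : Prop :=
  ∀ a b c : X, r a b → r b c → a ∈ S → c ∈ S → b ∈ S

/-- `S` is a union of at most `K` `r`-convex subsets of `X`. -/
def UnionOfAtMostConvex {X : Type*} (r : X → X → Prop) (K : ℕ) (S : Set X) : Prop :=
  ∃ C : Fin K → Set X, (∀ i, IsRConvex r (C i)) ∧ S = ⋃ i, C i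

/-- `φ(M; b̄)`, the set defined in `M` by the partitioned formula `φ(x; ȳ)` with
parameters `b̄`. -/
def realizeSet (L : Language) (M : Type*) [L.Structure M] {m : ℕ}
    (φ : L.Formula (Unit ⊕ Fin m)) (b : Fin m → M) : Set M :=
  {a : M | φ.Realize (Sum.elim (fun _ => a) b)}

/-- An `L`-structure `M` is convexly orderable if there is a linear order on `M` such
that every partitioned formula `φ(x; ȳ)` admits a uniform finite bound `K` such that
each `φ(M; b̄)` is a union of at most `K` convex sets. -/
def ConvexlyOrderable (L : Language) (M : Type*) [L.Structure M] : Prop :=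
  ∃ r : M → M → Prop, IsStrictTotalOrder M r ∧
    ∀ (m : ℕ) (φ : L.Formula (Unit ⊕ Fin m)), ∃ K : ℕ,
      ∀ b : Fin m → M, UnionOfAtMostConvex r K (realizeSet L M φ b)


/-- An alternating chain of length `2K+1` for `S`: an `r`-increasing sequence whose
even entries are in `S` and odd entries are not. -/
def AltChain {X : Type*} (r : X → X → Prop) (S : Set X) (K : ℕ)
    (a : Fin (2 * K + 1) → X) : Prop :=
  (∀ i : Fin (2 * K), r (a i.castSucc) (a i.succ)) ∧
  (∀ i : Fin (2 * K + 1), (i : ℕ) % 2 = 0 → a i ∈ S) ∧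
  (∀ i : Fin (2 * K + 1), (i : ℕ) % 2 = 1 → a i ∉ S)

lemma consec_trans {X : Type*} {r : X → X → Prop} [IsTrans X r] {n : ℕ}
    {a : Fin (n + 1) → X} (h : ∀ i : Fin n, r (a i.castSucc) (a i.succ)) :
    ∀ j : ℕ, ∀ hj : j < n + 1, ∀ i : ℕ, ∀ hij : i < j, r (a ⟨i, by omega⟩) (a ⟨j, hj⟩) := by
  intro j
  induction j with
  | zero => omega
  | succ j ih =>
    intro hj i hi
    have hstep : r (a ⟨j, by omega⟩) (a ⟨j + 1, hj⟩) := by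
      have := h ⟨j, by omega⟩
      simpa [Fin.castSucc, Fin.succ] using this
    rcases Nat.lt_or_ge i j with hij | hij
    · exact _root_.trans (ih (by omega) i hij) hstep
    · have : i = j := by omega
      subst this
      exact hstep

/-- If `S` is a union of at most `K` convex sets, there is no alternating chain of
length `2K+1`. -/
lemma noAlt_of_union {X : Type*} {r : X → X → Prop} {S : Set X} {K : ℕ}
    (hsto : IsStrictTotalOrder X r) (hU : UnionOfAtMostConvex r K S) :
    ∀ a : Fin (2 * K + 1) → X, ¬ AltChain r S K a := by
  haveI := hsto
  rintro a ⟨hc, hin, hout⟩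
  obtain ⟨C, hconv, hS⟩ := hU
  have hmem : ∀ j : Fin (K + 1), ∃ i : Fin K, a ⟨2 * (j : ℕ), by omega⟩ ∈ C i := by
    intro j
    have : a ⟨2 * (j : ℕ), by omega⟩ ∈ S := hin _ (by show (2 * (j:ℕ)) % 2 = 0; omega)
    rw [hS] at this
    exact Set.mem_iUnion.1 this
  choose f hf using hmem
  obtain ⟨j1, j2, hne, heq⟩ := Fintype.exists_ne_map_eq_of_card_lt f (by simp)
  have key : ∀ j1 j2 : Fin (K + 1), j1 < j2 → f j1 = f j2 → False := by
    intro j1 j2 hlt heq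
    have hj1K : (j1 : ℕ) < K := by
      have := j2.isLt
      have : (j1 : ℕ) < (j2 : ℕ) := hlt
      omega
    have hx : a ⟨2 * (j1 : ℕ), by omega⟩ ∈ C (f j1) := hf j1
    have hz : a ⟨2 * (j2 : ℕ), by omega⟩ ∈ C (f j1) := heq ▸ hf j2
    have hxy : r (a ⟨2 * (j1 : ℕ), by omega⟩) (a ⟨2 * (j1 : ℕ) + 1, by omega⟩) := by
      have := hc ⟨2 * (j1 : ℕ), by omega⟩
      simpa [Fin.castSucc, Fin.succ] using this
    have hyz : r (a ⟨2 * (j1 : ℕ) + 1, by omega⟩) (a ⟨2 * (j2 : ℕ), by omega⟩) := by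
      have hlt' : (j1 : ℕ) < (j2 : ℕ) := hlt
      have h2K : 2 * (j2 : ℕ) < 2 * K + 1 := by omega
      have hij : 2 * (j1 : ℕ) + 1 < 2 * (j2 : ℕ) := by omega
      exact consec_trans hc (2 * (j2 : ℕ)) h2K (2 * (j1 : ℕ) + 1) hij
    have hy : a ⟨2 * (j1 : ℕ) + 1, by omega⟩ ∈ C (f j1) :=
      hconv (f j1) _ _ _ hxy hyz hx hz
    have : a ⟨2 * (j1 : ℕ) + 1, by omega⟩ ∈ S := by
      rw [hS]; exact Set.mem_iUnion.2 ⟨f j1, hy⟩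
    exact hout ⟨2 * (j1 : ℕ) + 1, by omega⟩ (by show (2 * (j1:ℕ) + 1) % 2 = 1; omega) this
  rcases lt_or_gt_of_ne hne with hlt | hlt
  · exact key j1 j2 hlt heq
  · exact key j2 j1 hlt heq.symm

/-- If there is no alternating chain of length `2K+1`, then `S` is a union of at most
`K` convex sets. -/
lemma union_of_noAlt {X : Type*} {r : X → X → Prop} {S : Set X} {K : ℕ}
    (hsto : IsStrictTotalOrder X r) (hno : ∀ a : Fin (2 * K + 1) → X, ¬ AltChain r S K a) :
    UnionOfAtMostConvex r K S := by
  classical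
  haveI := hsto
  -- `P x k` : there is an alternating chain of length `2k+1` ending at `x`.
  set P : X → ℕ → Prop := fun x k =>
    ∃ a : Fin (2 * k + 1) → X, AltChain r S k a ∧ a (Fin.last (2 * k)) = x with hP
  have hP0 : ∀ x ∈ S, P x 0 := by
    intro x hx
    refine ⟨fun _ => x, ⟨fun i => absurd i.isLt (by omega), fun i _ => hx, fun i hi => ?_⟩, rfl⟩
    · have := i.isLt; omega
  have hPK : ∀ x, ¬ P x K := fun x ⟨a, ha, _⟩ => hno a ha
  -- replacing the endpoint by a larger element of `S`
  have hrepl : ∀ {x y : X} {k : ℕ}, P x k → r x y → y ∈ S → P y k := by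
    rintro x y k ⟨a, ⟨hc, hin, hout⟩, hlast⟩ hxy hy
    refine ⟨fun i => if i = Fin.last (2 * k) then y else a i, ⟨?_, ?_, ?_⟩, by simp⟩
    · intro i
      beta_reduce
      have h1 : i.castSucc ≠ Fin.last (2 * k) := by
        intro hcontra
        have := congrArg Fin.val hcontra
        simp [Fin.castSucc, Fin.last] at this
        omega
      rw [if_neg h1]
      by_cases h2 : i.succ = Fin.last (2 * k)
      · rw [if_pos h2]
        have := hc i
        rw [h2, hlast] at this
        exact _root_.trans this hxy
      · rw [if_neg h2]; exact hc i
    · intro i hi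
      beta_reduce
      by_cases h2 : i = Fin.last (2 * k)
      · rw [if_pos h2]; exact hy
      · rw [if_neg h2]; exact hin i hi
    · intro i hi
      beta_reduce
      by_cases h2 : i = Fin.last (2 * k)
      · exfalso
        have hv : (i : ℕ) = 2 * k := by rw [h2]; simp [Fin.last]
        omega
      · rw [if_neg h2]; exact hout i hi
  -- extending a chain by a gap element and a new endpoint
  have hext : ∀ {x y z : X} {k : ℕ}, P x k → r x y → r y z → y ∉ S → z ∈ S → P z (k + 1) := by
    rintro x y z k ⟨a, ⟨hc, hin, hout⟩, hlast⟩ hxy hyz hy hz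
    refine ⟨fun i => if h1 : (i : ℕ) < 2 * k + 1 then a ⟨i, h1⟩ else
      if (i : ℕ) = 2 * k + 1 then y else z, ⟨?_, ?_, ?_⟩, ?_⟩
    · intro i
      beta_reduce
      have hcv : ((i.castSucc : Fin (2 * (k + 1) + 1)) : ℕ) = (i : ℕ) := rfl
      have hsv : ((i.succ : Fin (2 * (k + 1) + 1)) : ℕ) = (i : ℕ) + 1 := rfl
      have hi := i.isLt
      rcases Nat.lt_or_ge (i : ℕ) (2 * k) with hlt | hge
      · rw [dif_pos (show ((i.castSucc : Fin (2*(k+1)+1)) : ℕ) < 2 * k + 1 by omega),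
          dif_pos (show ((i.succ : Fin (2*(k+1)+1)) : ℕ) < 2 * k + 1 by omega)]
        have := hc ⟨(i : ℕ), hlt⟩
        convert this using 2 <;> simp [Fin.castSucc, Fin.succ, hcv, hsv]
      · rcases Nat.lt_or_ge (i : ℕ) (2 * k + 1) with hlt2 | hge2
        · -- i = 2k : step from x to y
          have hieq : (i : ℕ) = 2 * k := by omega
          rw [dif_pos (show ((i.castSucc : Fin (2*(k+1)+1)) : ℕ) < 2 * k + 1 by omega),
            dif_neg (show ¬ ((i.succ : Fin (2*(k+1)+1)) : ℕ) < 2 * k + 1 by omega),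
            if_pos (show ((i.succ : Fin (2*(k+1)+1)) : ℕ) = 2 * k + 1 by omega)]
          have : a ⟨((i.castSucc : Fin (2*(k+1)+1)) : ℕ), by omega⟩ = x := by
            rw [← hlast]; congr 1; ext; simp [hcv, hieq, Fin.last]
          rw [this]; exact hxy
        · -- i = 2k+1 : step from y to z
          have hieq : (i : ℕ) = 2 * k + 1 := by omega
          rw [dif_neg (show ¬ ((i.castSucc : Fin (2*(k+1)+1)) : ℕ) < 2 * k + 1 by omega),
            if_pos (show ((i.castSucc : Fin (2*(k+1)+1)) : ℕ) = 2 * k + 1 by omega),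
            dif_neg (show ¬ ((i.succ : Fin (2*(k+1)+1)) : ℕ) < 2 * k + 1 by omega),
            if_neg (show ¬ ((i.succ : Fin (2*(k+1)+1)) : ℕ) = 2 * k + 1 by omega)]
          exact hyz
    · intro i hi
      beta_reduce
      rcases Nat.lt_or_ge (i : ℕ) (2 * k + 1) with hlt | hge
      · rw [dif_pos hlt]; exact hin ⟨(i : ℕ), hlt⟩ hi
      · have hi2 := i.isLt
        have hieq : (i : ℕ) = 2 * k + 2 := by omega
        rw [dif_neg (show ¬ (i : ℕ) < 2 * k + 1 by omega),
          if_neg (show ¬ (i : ℕ) = 2 * k + 1 by omega)]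
        exact hz
    · intro i hi
      beta_reduce
      rcases Nat.lt_or_ge (i : ℕ) (2 * k + 1) with hlt | hge
      · rw [dif_pos hlt]; exact hout ⟨(i : ℕ), hlt⟩ hi
      · have hi2 := i.isLt
        have hieq : (i : ℕ) = 2 * k + 1 := by omega
        rw [dif_neg (show ¬ (i : ℕ) < 2 * k + 1 by omega), if_pos hieq]
        exact hy
    · beta_reduce
      have hlv : ((Fin.last (2 * (k + 1))) : ℕ) = 2 * k + 2 := by
        simp [Fin.last]; omega
      rw [dif_neg (show ¬ ((Fin.last (2 * (k + 1))) : ℕ) < 2 * k + 1 by omega),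
        if_neg (show ¬ ((Fin.last (2 * (k + 1))) : ℕ) = 2 * k + 1 by omega)]
  -- main construction
  rcases Nat.eq_zero_or_pos K with rfl | hKpos
  · refine ⟨Fin.elim0, fun i => i.elim0, ?_⟩
    ext x
    simp only [Set.mem_iUnion]
    constructor
    · intro hx; exact absurd (hP0 x hx) (hPK x)
    · rintro ⟨i, _⟩; exact i.elim0
  · set n : X → ℕ := fun x => Nat.findGreatest (P x) (K - 1) with hn
    refine ⟨fun i => {x | x ∈ S ∧ n x = (i : ℕ)}, ?_, ?_⟩
    · rintro i x y z hxy hyz ⟨hxS, hxn⟩ ⟨hzS, hzn⟩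
      have Px : P x (n x) := Nat.findGreatest_spec (Nat.zero_le _) (hP0 x hxS)
      have hyS : y ∈ S := by
        by_contra hyS
        have Pz1 : P z (n x + 1) := hext Px hxy hyz hyS hzS
        rcases Nat.lt_or_ge (n x + 1) K with hlt | hge
        · have : n x + 1 ≤ n z := Nat.le_findGreatest (by omega) Pz1
          omega
        · have hnx : n x ≤ K - 1 := Nat.findGreatest_le _
          have : n x + 1 = K := by omega
          rw [this] at Pz1
          exact hPK z Pz1
      refine ⟨hyS, ?_⟩
      have Pyx : P y (n x) := hrepl Px hxy hyS
      have hxle : n x ≤ n y := Nat.le_findGreatest (Nat.findGreatest_le _) Pyx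
      have Py : P y (n y) := Nat.findGreatest_spec (Nat.zero_le _) (hP0 y hyS)
      have Pzy : P z (n y) := hrepl Py hyz hzS
      have hyle : n y ≤ n z := Nat.le_findGreatest (Nat.findGreatest_le _) Pzy
      omega
    · ext x
      simp only [Set.mem_iUnion, Set.mem_setOf_eq]
      constructor
      · intro hx
        have h1 : n x ≤ K - 1 := Nat.findGreatest_le _
        exact ⟨⟨n x, by omega⟩, hx, rfl⟩
      · rintro ⟨i, hxS, _⟩; exact hxS

lemma sto_of_parts {X : Type*} {r : X → X → Prop}
    (ht : ∀ x y : X, r x y ∨ x = y ∨ r y x) (hi : ∀ x : X, ¬ r x x)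
    (htr : ∀ x y z : X, r x y → r y z → r x z) : IsStrictTotalOrder X r :=
  { trichotomous := fun a b h1 h2 => by
      rcases ht a b with h | h | h
      · exact absurd h h1
      · exact h
      · exact absurd h h2,
    irrefl := hi, trans := htr }

lemma sto_pullback {X Y : Type*} {f : X → Y} (hf : Function.Injective f)
    {R : Y → Y → Prop} (h : IsStrictTotalOrder Y R) :
    IsStrictTotalOrder X (fun a b => R (f a) (f b)) := by
  refine sto_of_parts (fun x y => ?_) (fun x => h.irrefl (f x)) (fun x y z h1 h2 => h.trans _ _ _ h1 h2)
  haveI := h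
  rcases trichotomous (r := R) (f x) (f y) with h1 | h1 | h1
  · exact Or.inl h1
  · exact Or.inr (Or.inl (hf h1))
  · exact Or.inr (Or.inr h1)

lemma realize_foldr_inf {L : Language} {M : Type*} [L.Structure M] {α : Type*}
    (l : List (L.Formula α)) (v : α → M) :
    (l.foldr (· ⊓ ·) ⊤).Realize v ↔ ∀ φ ∈ l, φ.Realize v := by
  induction l with
  | nil => simp [Formula.realize_top]
  | cons φ l ih => simp [Formula.realize_inf, ih]

lemma realize_relabel_mem {L : Language} {P : Type*} [L.Structure P] {m : ℕ}
    (φ : L.Formula (Unit ⊕ Fin m)) {α : Type*} (g : Unit ⊕ Fin m → α) (v : α → P) :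
    (φ.relabel g).Realize v ↔
      v (g (Sum.inl ())) ∈ realizeSet L P φ (fun j => v (g (Sum.inr j))) := by
  rw [Formula.realize_relabel]
  have hvg : v ∘ g = Sum.elim (fun _ : Unit => v (g (Sum.inl ()))) (fun j => v (g (Sum.inr j))) := by
    funext x
    rcases x with u | j
    · cases u; rfl
    · rfl
  rw [hvg]
  exact Iff.rfl

/-- A single "constraint" on orders of `N`: the tuple `a` should not be an alternating
chain for `φ(N; b)`. -/
structure ConX (L : Language) (N : Type*) [L.Structure N]
    (K : ∀ m : ℕ, L.Formula (Unit ⊕ Fin m) → ℕ) where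
  m : ℕ
  φ : L.Formula (Unit ⊕ Fin m)
  b : Fin m → N
  a : Fin (2 * K m φ + 1) → N

/-- For any finite set of constraints, some strict total order on `N` satisfies them. -/
lemma finite_step {L : Language} {M N : Type*} [L.Structure M] [L.Structure N]
    (h : M ≅[L] N) {rM : M → M → Prop} (hsto : IsStrictTotalOrder M rM)
    (K : ∀ m : ℕ, L.Formula (Unit ⊕ Fin m) → ℕ)
    (hK : ∀ (m : ℕ) (φ : L.Formula (Unit ⊕ Fin m)) (b : Fin m → M),
      UnionOfAtMostConvex rM (K m φ) (realizeSet L M φ b))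
    (s : Finset (ConX L N K)) :
    ∃ r : N → N → Prop, IsStrictTotalOrder N r ∧
      ∀ c ∈ s, ¬ AltChain r (realizeSet L N c.φ c.b) (K c.m c.φ) c.a := by
  classical
  haveI := hsto
  set F : Finset N := s.biUnion (fun c => Finset.image c.a Finset.univ) with hF
  set p := F.card with hp
  set e : {x // x ∈ F} ≃ Fin p := F.equivFin with he
  let base : ∀ _ : {c // c ∈ s}, Fin p → L.Formula ((Fin p) ⊕ (Σ c : {c // c ∈ s}, Fin c.1.m)) :=
    fun c i => (c.1.φ).relabel (Sum.elim (fun _ => Sum.inl i) (fun j => Sum.inr ⟨c, j⟩))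
  let lit : ∀ _ : {c // c ∈ s}, Fin p → L.Formula ((Fin p) ⊕ (Σ c : {c // c ∈ s}, Fin c.1.m)) :=
    fun c i => if (e.symm i : N) ∈ realizeSet L N c.1.φ c.1.b then base c i else (base c i).not
  let dlit : Fin p → Fin p → L.Formula ((Fin p) ⊕ (Σ c : {c // c ∈ s}, Fin c.1.m)) :=
    fun i j => if i = j then ⊤ else
      (Term.equal (Term.var (Sum.inl i)) (Term.var (Sum.inl j))).not
  let l1 := (Finset.univ : Finset ({c // c ∈ s} × Fin p)).toList.map (fun ci => lit ci.1 ci.2)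
  let l2 := (Finset.univ : Finset (Fin p × Fin p)).toList.map (fun ij => dlit ij.1 ij.2)
  let ψ := (l1 ++ l2).foldr (· ⊓ ·) ⊤
  let σ : L.Sentence := (ψ.relabel (Sum.inr : _ → Empty ⊕ _)).iExs _
  -- `N ⊨ σ`
  have hNσ : N ⊨ σ := by
    have : ((ψ.relabel (Sum.inr : _ → Empty ⊕ _)).iExs _).Realize (default : Empty → N) := by
      rw [Formula.realize_iExs]
      refine ⟨Sum.elim (fun i => (e.symm i : N)) (fun cj => cj.1.1.b cj.2), ?_⟩
      rw [Formula.realize_relabel, Sum.elim_comp_inr]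
      have : ∀ φ' ∈ l1 ++ l2, Formula.Realize φ'
          (Sum.elim (fun i => (e.symm i : N)) (fun cj : (Σ c : {c // c ∈ s}, Fin c.1.m) => cj.1.1.b cj.2)) := by
        intro φ' hφ'
        rcases List.mem_append.1 hφ' with h1 | h1
        · obtain ⟨ci, _, rfl⟩ := List.mem_map.1 h1
          by_cases ht : (e.symm ci.2 : N) ∈ realizeSet L N ci.1.1.φ ci.1.1.b
          · show (lit ci.1 ci.2).Realize _
            unfold lit
            beta_reduce
            rw [if_pos ht, realize_relabel_mem]
            exact ht
          · show (lit ci.1 ci.2).Realize _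
            unfold lit
            beta_reduce
            rw [if_neg ht, Formula.realize_not, realize_relabel_mem]
            exact ht
        · obtain ⟨ij, _, rfl⟩ := List.mem_map.1 h1
          show (dlit ij.1 ij.2).Realize _
          unfold dlit
          beta_reduce
          by_cases hij : ij.1 = ij.2
          · rw [if_pos hij]; exact Formula.realize_top.2 trivial
          · rw [if_neg hij, Formula.realize_not, Formula.realize_equal]
            intro heq
            apply hij
            exact e.symm.injective (Subtype.coe_injective heq)
      exact (realize_foldr_inf _ _).2 this
    exact this
  have hMσ : M ⊨ σ := (h.realize_sentence σ).2 hNσ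
  obtain ⟨w', hw'⟩ : ∃ w' : (Fin p) ⊕ (Σ c : {c // c ∈ s}, Fin c.1.m) → M,
      ψ.Realize w' := by
    have : ((ψ.relabel (Sum.inr : _ → Empty ⊕ _)).iExs _).Realize (default : Empty → M) := hMσ
    rw [Formula.realize_iExs] at this
    obtain ⟨w', hw'⟩ := this
    rw [Formula.realize_relabel, Sum.elim_comp_inr] at hw'
    exact ⟨w', hw'⟩
  have hw := (realize_foldr_inf _ _).1 hw'
  let aM : Fin p → M := fun i => w' (Sum.inl i)
  let bM : ∀ c : {c // c ∈ s}, Fin c.1.m → M := fun c j => w' (Sum.inr ⟨c, j⟩)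
  have hinj : Function.Injective aM := by
    intro i j hij
    by_contra hne
    have hmem : dlit i j ∈ l1 ++ l2 :=
      List.mem_append.2 (Or.inr (List.mem_map.2 ⟨(i, j), by simp, rfl⟩))
    have := hw _ hmem
    unfold dlit at this
    beta_reduce at this
    rw [if_neg hne, Formula.realize_not, Formula.realize_equal] at this
    exact this hij
  have hmatch : ∀ (c : {c // c ∈ s}) (i : Fin p),
      aM i ∈ realizeSet L M c.1.φ (bM c) ↔ (e.symm i : N) ∈ realizeSet L N c.1.φ c.1.b := by
    intro c i
    have hmem : lit c i ∈ l1 ++ l2 :=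
      List.mem_append.2 (Or.inl (List.mem_map.2 ⟨(c, i), by simp, rfl⟩))
    have hli := hw _ hmem
    by_cases ht : (e.symm i : N) ∈ realizeSet L N c.1.φ c.1.b
    · unfold lit at hli
      beta_reduce at hli
      rw [if_pos ht, realize_relabel_mem] at hli
      exact iff_of_true hli ht
    · unfold lit at hli
      beta_reduce at hli
      rw [if_neg ht, Formula.realize_not, realize_relabel_mem] at hli
      exact iff_of_false hli ht
  -- order on `N`
  let g : N → M ⊕ N := fun x => if hx : x ∈ F then Sum.inl (aM (e ⟨x, hx⟩)) else Sum.inr x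
  have hg : Function.Injective g := by
    intro x y hxy
    unfold g at hxy
    beta_reduce at hxy
    by_cases hx : x ∈ F <;> by_cases hy : y ∈ F
    · rw [dif_pos hx, dif_pos hy] at hxy
      have := hinj (Sum.inl.inj hxy)
      have := e.injective this
      exact congrArg Subtype.val this
    · rw [dif_pos hx, dif_neg hy] at hxy; exact absurd hxy (Sum.inl_ne_inr)
    · rw [dif_neg hx, dif_pos hy] at hxy; exact absurd hxy (Sum.inr_ne_inl)
    · rw [dif_neg hx, dif_neg hy] at hxy; exact Sum.inr.inj hxy
  have hRsto : IsStrictTotalOrder (M ⊕ N) (Sum.Lex rM WellOrderingRel) :=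
    sto_of_parts (fun x y => trichotomous x y) (fun x => irrefl x) (fun x y z => _root_.trans)
  refine ⟨fun x y => Sum.Lex rM WellOrderingRel (g x) (g y), sto_pullback hg hRsto, ?_⟩
  rintro c hc ⟨hchain, hin, hout⟩
  have memF : ∀ i, c.a i ∈ F := fun i =>
    Finset.mem_biUnion.2 ⟨c, hc, Finset.mem_image.2 ⟨i, Finset.mem_univ i, rfl⟩⟩
  refine noAlt_of_union hsto (hK c.m c.φ (bM ⟨c, hc⟩))
    (fun i => aM (e ⟨c.a i, memF i⟩)) ⟨?_, ?_, ?_⟩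
  · intro i
    have hr := hchain i
    unfold g at hr
    beta_reduce at hr
    rw [dif_pos (memF i.castSucc), dif_pos (memF i.succ)] at hr
    exact Sum.lex_inl_inl.1 hr
  · intro i hi
    refine (hmatch ⟨c, hc⟩ (e ⟨c.a i, memF i⟩)).2 ?_
    rw [Equiv.symm_apply_apply]
    exact hin i hi
  · intro i hi
    intro hcontra
    have := (hmatch ⟨c, hc⟩ (e ⟨c.a i, memF i⟩)).1 hcontra
    rw [Equiv.symm_apply_apply] at this
    exact hout i hi this

theorem stmt_5 {L : Language} {M N : Type*} [L.Structure M] [L.Structure N]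
    (h : M ≅[L] N) (hM : ConvexlyOrderable L M) : ConvexlyOrderable L N := by
  classical
  obtain ⟨rM, hsto, hb⟩ := hM
  choose K hK using hb
  have hfin := fun s : Finset (ConX L N K) => finite_step h hsto K hK s
  choose rs hsto' hcon using hfin
  haveI : Nonempty (Finset (ConX L N K)) := ⟨∅⟩
  haveI := Filter.atTop_neBot (α := Finset (ConX L N K))
  set U : Ultrafilter (Finset (ConX L N K)) := Ultrafilter.of Filter.atTop with hUdef
  have hU : ∀ {A : Set (Finset (ConX L N K))}, A ∈ Filter.atTop → A ∈ U :=
    fun hA => Ultrafilter.of_le _ hA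
  set r : N → N → Prop := fun x y => {t | rs t x y} ∈ U with hr
  have hsr : IsStrictTotalOrder N r := by
    refine sto_of_parts ?_ ?_ ?_
    · intro x y
      by_cases hxy : x = y
      · exact Or.inr (Or.inl hxy)
      · have hmem : {t | rs t x y} ∪ {t | rs t y x} ∈ U := by
          have huniv : ({t | rs t x y} ∪ {t | rs t y x}) = Set.univ := by
            ext t
            simp only [Set.mem_union, Set.mem_setOf_eq, Set.mem_univ, iff_true]
            haveI := hsto' t
            rcases trichotomous (r := rs t) x y with h1 | h1 | h1
            · exact Or.inl h1
            · exact absurd h1 hxy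
            · exact Or.inr h1
          rw [huniv]
          exact Filter.univ_mem
        rcases Ultrafilter.union_mem_iff.1 hmem with h1 | h1
        · exact Or.inl h1
        · exact Or.inr (Or.inr h1)
    · intro x hx
      have hempty : {t | rs t x x} = ∅ := by
        ext t
        simp only [Set.mem_setOf_eq, Set.mem_empty_iff_false, iff_false]
        exact (hsto' t).irrefl x
      have := Ultrafilter.nonempty_of_mem hx
      rw [hempty] at this
      exact Set.not_nonempty_empty this
    · intro x y z hxy hyz
      exact Filter.mem_of_superset (Filter.inter_mem hxy hyz)
        (fun t ⟨h1, h2⟩ => (hsto' t).trans _ _ _ h1 h2)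
  refine ⟨r, hsr, fun m φ => ⟨K m φ, fun b => ?_⟩⟩
  apply union_of_noAlt hsr
  rintro a ⟨hchain, hin, hout⟩
  set c : ConX L N K := ⟨m, φ, b, a⟩ with hc
  have hA : {t : Finset (ConX L N K) | c ∈ t} ∈ U := by
    apply hU
    refine Filter.mem_of_superset (Filter.Ici_mem_atTop ({c} : Finset (ConX L N K))) ?_
    intro t ht
    exact Finset.singleton_subset_iff.1 ht
  have hB : (⋂ i : Fin (2 * K m φ), {t | rs t (a i.castSucc) (a i.succ)}) ∈ U :=
    Filter.iInter_mem.2 (fun i => hchain i)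
  obtain ⟨t, htc, htB⟩ := Ultrafilter.nonempty_of_mem (Filter.inter_mem hA hB)
  exact hcon t c htc ⟨fun i => Set.mem_iInter.1 htB i, hin, hout⟩
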